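/- If Δ is a {0,1}-valued random variable and Y a real random variable with E[Δ | X, Y] = p(X) almost surely (the MAR assumption), and p(X) > 0 a.s., then E[ΔY / p(X) | X] = E[Y | X] almost surely. -/

import Mathlib

open MeasureTheory

/-- Under MAR (E[Δ | X,Y] = p(X) a.s.) with p(X) > 0 a.s.,
E[ΔY / p(X) | X] = E[Y | X] a.s. Here mX is the σ-algebra generated by X and
mXY the one generated by (X, Y). -/
theorem stmt_0 {Ω : Type*} {m0 : MeasurableSpace Ω} (μ : Measure Ω) [IsProbabilityMeasure μ]
    (mX mXY : MeasurableSpace Ω) (hXXY : mX ≤ mXY) (hXY : mXY ≤ m0)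
    (Δ Y pX : Ω → ℝ)
    (hΔ01 : ∀ ω, Δ ω = 0 ∨ Δ ω = 1)
    (hpXmeas : StronglyMeasurable[mX] pX)
    (hYmeas : StronglyMeasurable[mXY] Y)
    (hYint : Integrable Y μ)
    (hint : Integrable (fun ω => Δ ω * Y ω / pX ω) μ)
    (hpos : ∀ᵐ ω ∂μ, 0 < pX ω)
    (hMAR : μ[Δ | mXY] =ᵐ[μ] pX) :
    μ[(fun ω => Δ ω * Y ω / pX ω) | mX] =ᵐ[μ] μ[Y | mX] := by
  -- Δ must be integrable, else its conditional expectation is 0, contradicting pX > 0 a.e.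
  have hΔint : Integrable Δ μ := by
    by_contra h
    rw [condExp_of_not_integrable h] at hMAR
    have : ∀ᵐ ω ∂μ, (0 : ℝ) < 0 := by
      filter_upwards [hpos, hMAR.symm] with ω h1 h2
      simpa [h2] using h1
    simpa using this.exists
  set f : Ω → ℝ := fun ω => Y ω / pX ω with hf_def
  have hfmeas : StronglyMeasurable[mXY] f := (hYmeas.measurable.mul (hpXmeas.mono hXXY).measurable.inv).stronglyMeasurable
  have heq : (fun ω => Δ ω * Y ω / pX ω) = f * Δ := by
    funext ω; simp only [hf_def, Pi.mul_apply]; ring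
  have hfg : Integrable (f * Δ) μ := heq ▸ hint
  have hpull : μ[f * Δ | mXY] =ᵐ[μ] f * μ[Δ | mXY] :=
    condExp_mul_of_stronglyMeasurable_left hfmeas hfg hΔint
  have hinner : μ[f * Δ | mXY] =ᵐ[μ] Y := by
    refine hpull.trans ?_
    filter_upwards [hMAR, hpos] with ω h1 h2
    simp only [Pi.mul_apply, hf_def, h1]
    field_simp
  calc μ[(fun ω => Δ ω * Y ω / pX ω) | mX] = μ[f * Δ | mX] := by rw [heq]
    _ =ᵐ[μ] μ[μ[f * Δ | mXY] | mX] := (condExp_condExp_of_le hXXY hXY).symm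
    _ =ᵐ[μ] μ[Y | mX] := condExp_congr_ae hinner
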